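/- arXiv:1608.06782 — 2 statements merged into one kernel-verified Lean document; each statement's English description precedes it below -/
import Mathlib

section
/- For each fixed x > 0, 1 − W(−x, −α/2, 1) tends to erf(x/2) as α → 1⁻. -/
open Real Filter Set
open scoped Topology

/-- The Wright function `W(x,a,b)`, with the convention that `1/Gamma` vanishes at
the nonpositive integers (in Mathlib, `Real.Gamma` is `0` there, and division by
`0` is `0`). -/
noncomputable def wright (x a b : ℝ) : ℝ :=
  ∑' k : ℕ, x ^ k / (Nat.factorial k * Real.Gamma (a * k + b))

/-- The Mainardi function `M_ν(x) = W(−x, −ν, 1−ν)`. -/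
noncomputable def mainardi (ν x : ℝ) : ℝ := wright (-x) (-ν) (1 - ν)

/-- The error function `erf(x) = (2/√π) ∫₀ˣ exp(−s²) ds`. -/
noncomputable def erf (x : ℝ) : ℝ :=
  2 / Real.sqrt Real.pi * ∫ s in (0:ℝ)..x, Real.exp (-s ^ 2)

lemma continuous_inv_Gamma : Continuous fun s : ℝ => (Real.Gamma s)⁻¹ := by
  have h : (fun s : ℝ => (Real.Gamma s)⁻¹) =
      fun s : ℝ => ((Complex.Gamma (s : ℂ))⁻¹).re := by
    funext s
    rw [Complex.Gamma_ofReal, ← Complex.ofReal_inv, Complex.ofReal_re]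
  rw [h]
  exact Complex.continuous_re.comp
    (Complex.differentiable_one_div_Gamma.continuous.comp Complex.continuous_ofReal)

lemma inv_Gamma_one_sub {t : ℝ} (ht : 0 < t) :
    (Real.Gamma (1 - t))⁻¹ = Real.Gamma t * Real.sin (π * t) / π := by
  have h := Real.Gamma_mul_Gamma_one_sub t
  have hΓ : Real.Gamma t ≠ 0 := (Real.Gamma_pos_of_pos ht).ne'
  have hπ : (π : ℝ) ≠ 0 := Real.pi_ne_zero
  rcases eq_or_ne (Real.sin (π * t)) 0 with hs | hs
  · rw [hs, div_zero] at h
    rw [(mul_eq_zero.mp h).resolve_left hΓ, inv_zero, hs, mul_zero, zero_div]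
  · have h2 : Real.Gamma (1 - t) = π / Real.sin (π * t) / Real.Gamma t := by
      field_simp at h ⊢
      linarith [h]
    rw [h2]
    field_simp

lemma Gamma_le_max {a b y : ℝ} (ha : 0 < a) (hay : a ≤ y) (hyb : y ≤ b) :
    Real.Gamma y ≤ max (Real.Gamma a) (Real.Gamma b) := by
  have hy : 0 < y := lt_of_lt_of_le ha hay
  have hb : 0 < b := lt_of_lt_of_le hy hyb
  have h := Real.convexOn_log_Gamma.le_on_segment (Set.mem_Ioi.mpr ha)
    (Set.mem_Ioi.mpr hb) (by rw [segment_eq_Icc (hay.trans hyb)]; exact ⟨hay, hyb⟩)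
  simp only [Function.comp_apply] at h
  rcases le_max_iff.mp h with h' | h'
  · exact le_max_of_le_left
      ((Real.log_le_log_iff (Real.Gamma_pos_of_pos hy) (Real.Gamma_pos_of_pos ha)).mp h')
  · exact le_max_of_le_right
      ((Real.log_le_log_iff (Real.Gamma_pos_of_pos hy) (Real.Gamma_pos_of_pos hb)).mp h')

lemma Gamma_half_le_sqrt (k : ℕ) :
    Real.Gamma ((k : ℝ) / 2 + 1) ≤ Real.sqrt (Nat.factorial k) := by
  have hk1 : (0:ℝ) < (k:ℝ) + 1 := by positivity
  have h := Real.convexOn_log_Gamma.2 (Set.mem_Ioi.mpr one_pos) (Set.mem_Ioi.mpr hk1)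
    (by norm_num : (0:ℝ) ≤ 1/2) (by norm_num : (0:ℝ) ≤ 1/2) (by norm_num)
  have e1 : (1/2 : ℝ) • (1:ℝ) + (1/2 : ℝ) • ((k:ℝ) + 1) = (k:ℝ)/2 + 1 := by
    simp only [smul_eq_mul]; ring
  rw [e1] at h
  simp only [Function.comp_apply, smul_eq_mul, Real.Gamma_one, Real.log_one, mul_zero,
    zero_add] at h
  rw [Real.Gamma_nat_eq_factorial k] at h
  have hpos : 0 < Real.Gamma ((k:ℝ)/2 + 1) := Real.Gamma_pos_of_pos (by positivity)
  have hfac : (0:ℝ) < (Nat.factorial k : ℝ) := by positivity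
  calc Real.Gamma ((k:ℝ)/2 + 1) = Real.exp (Real.log (Real.Gamma ((k:ℝ)/2 + 1))) :=
        (Real.exp_log hpos).symm
    _ ≤ Real.exp (1/2 * Real.log (Nat.factorial k)) := Real.exp_le_exp.mpr h
    _ = Real.sqrt (Nat.factorial k) := by
        rw [Real.sqrt_eq_rpow, Real.rpow_def_of_pos hfac]
        ring_nf

lemma tendsto_sqrt_nat : Tendsto (fun k : ℕ => Real.sqrt ((k : ℝ) + 1)) atTop atTop := by
  apply tendsto_atTop_atTop.mpr
  intro b
  refine ⟨⌈b^2⌉₊, fun n hn => ?_⟩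
  have h1 : b ≤ Real.sqrt (b ^ 2) := by
    rw [Real.sqrt_sq_eq_abs]; exact le_abs_self b
  refine h1.trans (Real.sqrt_le_sqrt ?_)
  calc b ^ 2 ≤ (⌈b^2⌉₊ : ℝ) := Nat.le_ceil _
    _ ≤ (n : ℝ) := Nat.cast_le.mpr hn
    _ ≤ (n : ℝ) + 1 := by linarith

lemma summable_pow_div_sqrt_factorial {x : ℝ} (hx : 0 < x) :
    Summable fun k : ℕ => x ^ k / Real.sqrt (Nat.factorial k) := by
  apply summable_of_ratio_test_tendsto_lt_one (l := 0) zero_lt_one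
  · filter_upwards with k
    have : (0:ℝ) < x ^ k / Real.sqrt (Nat.factorial k) := by positivity
    exact this.ne'
  · have heq : ∀ k : ℕ, ‖x ^ (k+1) / Real.sqrt (Nat.factorial (k+1))‖ / ‖x ^ k / Real.sqrt (Nat.factorial k)‖
        = x / Real.sqrt ((k : ℝ) + 1) := by
      intro k
      have hf : (0:ℝ) < Real.sqrt (Nat.factorial k) := by positivity
      have hx1 : (0:ℝ) < ((k:ℝ) + 1) := by positivity
      rw [Real.norm_eq_abs, Real.norm_eq_abs, abs_of_pos (by positivity),
        abs_of_pos (by positivity)]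
      have hfs : (Nat.factorial (k+1) : ℝ) = ((k:ℝ) + 1) * (Nat.factorial k : ℝ) := by
        rw [Nat.factorial_succ]; push_cast; ring
      rw [hfs, Real.sqrt_mul hx1.le]
      field_simp
      ring
    simp only [heq]
    exact tendsto_const_nhds.div_atTop tendsto_sqrt_nat

lemma Gamma_nat_add_half (n : ℕ) :
    Real.Gamma ((n : ℝ) + 1/2) = Real.sqrt π * (Nat.factorial (2*n)) / (4^n * Nat.factorial n) := by
  induction n with
  | zero =>
    rw [show ((0:ℕ):ℝ) + 1/2 = 1/2 by norm_num, Real.Gamma_one_half_eq]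
    norm_num [Nat.factorial]
  | succ n ih =>
    have h0 : ((n : ℝ) + 1/2) ≠ 0 := by positivity
    have e1 : ((n+1 : ℕ) : ℝ) + 1/2 = ((n : ℝ) + 1/2) + 1 := by push_cast; ring
    rw [e1, Real.Gamma_add_one h0, ih]
    have e2 : (Nat.factorial (2*(n+1)) : ℝ)
        = (2*(n:ℝ)+2) * (2*(n:ℝ)+1) * Nat.factorial (2*n) := by
      have : 2*(n+1) = (2*n+1) + 1 := by ring
      rw [this, Nat.factorial_succ, Nat.factorial_succ]
      push_cast; ring
    have e3 : (Nat.factorial (n+1) : ℝ) = ((n:ℝ)+1) * Nat.factorial n := by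
      rw [Nat.factorial_succ]; push_cast; ring
    rw [e2, e3]
    have h4 : (0:ℝ) < 4 ^ n := by positivity
    have hf : (0:ℝ) < (Nat.factorial n : ℝ) := by positivity
    have hn1 : (0:ℝ) < (n:ℝ) + 1 := by positivity
    rw [pow_succ]
    field_simp
    ring

lemma hasSum_erf (t : ℝ) :
    HasSum (fun n : ℕ =>
      2 / Real.sqrt π * ((-1)^n * t^(2*n+1) / (Nat.factorial n * (2*n+1)))) (erf t) := by
  have key : HasSum (fun n : ℕ => ∫ s in (0:ℝ)..t, ((-1:ℝ)^n * s^(2*n) / Nat.factorial n))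
      (∫ s in (0:ℝ)..t, Real.exp (-s^2)) := by
    apply intervalIntegral.hasSum_integral_of_dominated_convergence
      (bound := fun n _ => |t|^(2*n) / Nat.factorial n)
    · intro n
      apply Continuous.aestronglyMeasurable
      continuity
    · intro n
      filter_upwards with s hs
      have hs' : |s| ≤ |t| := by
        rw [Set.mem_uIoc] at hs
        rcases hs with ⟨h1, h2⟩ | ⟨h1, h2⟩
        · rw [abs_of_pos h1, abs_of_nonneg (h1.le.trans h2)]; exact h2
        · rw [abs_of_nonpos h2]
          calc -s ≤ -t := by linarith
            _ ≤ |t| := neg_le_abs t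
      rw [Real.norm_eq_abs, abs_div, abs_mul, abs_pow, abs_pow, abs_neg, abs_one, one_pow, one_mul,
        Nat.abs_cast]
      gcongr
    · filter_upwards with s _
      have h := Real.summable_pow_div_factorial (|t|^2)
      apply h.congr
      intro n
      rw [← pow_mul]
    · apply intervalIntegrable_const
    · filter_upwards with s _
      have h := NormedSpace.expSeries_div_hasSum_exp (-s^2)
      rw [← Real.exp_eq_exp_ℝ] at h
      have e : (fun n : ℕ => (-1:ℝ)^n * s^(2*n) / Nat.factorial n)
          = fun n : ℕ => (-s^2)^n / Nat.factorial n := by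
        funext n
        rw [pow_mul]; ring
      rw [e]
      exact h
  have he : ∀ n : ℕ, (∫ s in (0:ℝ)..t, ((-1:ℝ)^n * s^(2*n) / Nat.factorial n))
      = (-1:ℝ)^n * t^(2*n+1) / (Nat.factorial n * (2*n+1)) := by
    intro n
    have : (fun s : ℝ => (-1:ℝ)^n * s^(2*n) / Nat.factorial n)
        = fun s : ℝ => ((-1:ℝ)^n / Nat.factorial n) * s^(2*n) := by
      funext s; ring
    rw [this, intervalIntegral.integral_const_mul, integral_pow]
    have hfn : (0:ℝ) < (Nat.factorial n : ℝ) := by positivity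
    have h2n : (0:ℝ) < (2*(n:ℝ)+1) := by positivity
    push_cast
    field_simp
    simp
  have key2 := key.mul_left (2 / Real.sqrt π)
  rw [show (2 / Real.sqrt π * ∫ s in (0:ℝ)..t, Real.exp (-s^2)) = erf t from rfl] at key2
  simp only [he] at key2
  exact key2

lemma hasSum_wright_lim (x : ℝ) :
    HasSum (fun k : ℕ => (-x)^k / (Nat.factorial k * Real.Gamma (-(1/2:ℝ) * k + 1)))
      (1 - erf (x/2)) := by
  set f : ℕ → ℝ := fun k => (-x)^k / (Nat.factorial k * Real.Gamma (-(1/2:ℝ) * k + 1)) with hf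
  have he : HasSum (fun n : ℕ => f (2*n)) 1 := by
    have e : (fun n : ℕ => f (2*n)) = fun n : ℕ => if n = 0 then (1:ℝ) else 0 := by
      funext n
      cases n with
      | zero => simp [hf, Real.Gamma_one]
      | succ m =>
        have harg : -(1/2:ℝ) * ((2*(m+1) : ℕ) : ℝ) + 1 = -((m : ℕ) : ℝ) := by push_cast; ring
        simp only [hf, harg, Real.Gamma_neg_nat_eq_zero, mul_zero, div_zero]
        simp
    rw [e]
    exact hasSum_ite_eq 0 1
  have ho : HasSum (fun n : ℕ => f (2*n+1)) (-(erf (x/2))) := by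
    have e : (fun n : ℕ => f (2*n+1)) = fun n : ℕ =>
        -(2 / Real.sqrt π * ((-1)^n * (x/2)^(2*n+1) / (Nat.factorial n * (2*n+1)))) := by
      funext n
      have harg : -(1/2:ℝ) * ((2*n+1 : ℕ) : ℝ) + 1 = 1 - ((n:ℝ) + 1/2) := by push_cast; ring
      have ht : (0:ℝ) < (n:ℝ) + 1/2 := by positivity
      have hsin : Real.sin (π * ((n:ℝ) + 1/2)) = (-1)^n := by
        have e2 : π * ((n:ℝ) + 1/2) = (n:ℝ) * π + π/2 := by ring
        rw [e2, Real.sin_add_pi_div_two]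
        simpa using Real.cos_nat_mul_pi_sub 0 n
      have hfs : (Nat.factorial (2*n+1) : ℝ) = (2*(n:ℝ)+1) * Nat.factorial (2*n) := by
        rw [Nat.factorial_succ]; push_cast; ring
      have hneg : (-x)^(2*n+1) = -(x^(2*n+1)) := Odd.neg_pow ⟨n, by ring⟩ x
      have h4 : (4:ℝ)^n = 2^n * 2^n := by rw [← mul_pow]; norm_num
      have h2p : (2:ℝ)^(2*n+1) = 2 * (2^n * 2^n) := by
        rw [pow_succ, two_mul, pow_add]; ring
      simp only [hf]
      rw [harg, div_eq_mul_inv, mul_inv, inv_Gamma_one_sub ht, hsin, _root_.Gamma_nat_add_half,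
        hfs, hneg, div_pow, h4, h2p]
      have hsq : Real.sqrt π ≠ 0 := by positivity
      have hfn : (Nat.factorial n : ℝ) ≠ 0 := by positivity
      have hf2n : (Nat.factorial (2*n) : ℝ) ≠ 0 := by positivity
      have h2n1 : (2*(n:ℝ)+1) ≠ 0 := by positivity
      have h2pn : ((2:ℝ)^n) ≠ 0 := by positivity
      field_simp
      ring_nf
      rw [Real.sq_sqrt Real.pi_pos.le]
    rw [e]
    exact (hasSum_erf (x/2)).neg
  have h := he.even_add_odd ho
  rw [← sub_eq_add_neg] at h
  exact h

theorem wright_tendsto_erf (x : ℝ) (hx : 0 < x) :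
    Tendsto (fun α : ℝ => 1 - wright (-x) (-(α / 2)) 1)
      (nhdsWithin 1 (Set.Ioo 0 1)) (nhds (erf (x / 2))) := by
  set F : ℝ → ℕ → ℝ := fun α k => (-x)^k / (Nat.factorial k * Real.Gamma (-(α/2) * k + 1))
    with hF
  set g : ℕ → ℝ := fun k => (-x)^k / (Nat.factorial k * Real.Gamma (-(1/2:ℝ) * k + 1)) with hg
  set bound : ℕ → ℝ := fun k =>
    (Real.Gamma (1/4) / π * (x^k / Nat.factorial k) + x^k / (π * Real.sqrt (Nat.factorial k)))
      + (if k = 0 then 1 else 0) with hbound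
  have hGq : (0:ℝ) < Real.Gamma (1/4) := Real.Gamma_pos_of_pos (by norm_num)
  have hsum : Summable bound := by
    refine Summable.add (Summable.add ?_ ?_) ?_
    · exact (Real.summable_pow_div_factorial x).mul_left _
    · have h := (summable_pow_div_sqrt_factorial hx).mul_left (1/π)
      refine h.congr fun k => ?_
      have hs : Real.sqrt (Nat.factorial k) ≠ 0 := by positivity
      field_simp
    · refine summable_of_ne_finset_zero (s := {0}) fun k hk => ?_
      simp only [Finset.mem_singleton] at hk
      simp [hk]
  have hlim : ∀ k, Tendsto (fun α => F α k) (𝓝[Ioo (0:ℝ) 1] 1) (𝓝 (g k)) := by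
    intro k
    have he : ∀ α : ℝ, F α k
        = (-x)^k * ((Nat.factorial k : ℝ))⁻¹ * (Real.Gamma (-(α/2) * k + 1))⁻¹ := by
      intro α
      simp only [hF]
      rw [div_eq_mul_inv, mul_inv, mul_assoc]
    have hc : Continuous fun α : ℝ =>
        (-x)^k * ((Nat.factorial k : ℝ))⁻¹ * (Real.Gamma (-(α/2) * k + 1))⁻¹ := by
      refine continuous_const.mul (continuous_inv_Gamma.comp ?_)
      continuity
    have h1 := (hc.tendsto 1).mono_left (nhdsWithin_le_nhds :
      𝓝[Ioo (0:ℝ) 1] 1 ≤ 𝓝 1)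
    refine Tendsto.congr (fun α => (he α).symm) ?_
    have : g k = (-x)^k * ((Nat.factorial k : ℝ))⁻¹ * (Real.Gamma (-((1:ℝ)/2) * k + 1))⁻¹ := by
      simp only [hg]
      rw [div_eq_mul_inv, mul_inv, mul_assoc]
    rw [this]
    exact h1
  have hbd : ∀ᶠ α in 𝓝[Ioo (0:ℝ) 1] 1, ∀ k, ‖F α k‖ ≤ bound k := by
    have h2 : ∀ᶠ α in 𝓝[Ioo (0:ℝ) 1] 1, (1/2:ℝ) < α :=
      Filter.Eventually.filter_mono nhdsWithin_le_nhds (eventually_gt_nhds (by norm_num))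
    filter_upwards [eventually_mem_nhdsWithin, h2] with α hα hα2
    intro k
    rcases Nat.eq_zero_or_pos k with rfl | hk
    · have h0 : F α 0 = 1 := by
        simp [hF, Real.Gamma_one]
      rw [h0]
      simp only [hbound, if_pos]
      have hA : (0:ℝ) ≤ Real.Gamma (1/4) / π * (x^0 / (Nat.factorial 0 : ℝ)) := by positivity
      have hB : (0:ℝ) ≤ x^0 / (π * Real.sqrt ((Nat.factorial 0 : ℕ) : ℝ)) := by positivity
      rw [Real.norm_eq_abs, abs_one]
      push_cast at hA hB ⊢
      linarith
    · have hk1 : (1:ℝ) ≤ (k:ℝ) := by exact_mod_cast hk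
      set t := α/2 * k with htdef
      have hα0 : (0:ℝ) < α := hα.1
      have ht : 0 < t := by positivity
      have harg : -(α/2) * (k:ℝ) + 1 = 1 - t := by rw [htdef]; ring
      have hfpos : (0:ℝ) < (Nat.factorial k : ℝ) := by positivity
      have hnorm : ‖F α k‖ = x^k / Nat.factorial k * |(Real.Gamma (1 - t))⁻¹| := by
        simp only [hF]
        rw [harg, div_eq_mul_inv, mul_inv, Real.norm_eq_abs, abs_mul, abs_mul, abs_pow,
          abs_neg, abs_of_pos hx, abs_inv, Nat.abs_cast, div_eq_mul_inv]
        ring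
      have habs : |(Real.Gamma (1-t))⁻¹| ≤ Real.Gamma t / π := by
        rw [inv_Gamma_one_sub ht, abs_div, abs_mul,
          abs_of_pos (Real.Gamma_pos_of_pos ht), abs_of_pos Real.pi_pos]
        have hsin : |Real.sin (π * t)| ≤ 1 := abs_le.mpr ⟨Real.neg_one_le_sin _, Real.sin_le_one _⟩
        calc Real.Gamma t * |Real.sin (π * t)| / π ≤ Real.Gamma t * 1 / π := by gcongr
          _ = Real.Gamma t / π := by ring
      have h14 : (1/4 : ℝ) ≤ t := by nlinarith
      have htk : t ≤ (k:ℝ)/2 + 1 := by nlinarith [hα.2]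
      have hGt : Real.Gamma t ≤ Real.Gamma (1/4) + Real.sqrt (Nat.factorial k) := by
        refine (Gamma_le_max (by norm_num) h14 htk).trans (max_le ?_ ?_)
        · exact le_add_of_nonneg_right (Real.sqrt_nonneg _)
        · exact (Gamma_half_le_sqrt k).trans (le_add_of_nonneg_left hGq.le)
      have hsqf : (0:ℝ) < Real.sqrt (Nat.factorial k) := by positivity
      have step : ‖F α k‖ ≤ x^k / Nat.factorial k
          * ((Real.Gamma (1/4) + Real.sqrt (Nat.factorial k)) / π) := by
        rw [hnorm]
        have h1 : |(Real.Gamma (1-t))⁻¹|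
            ≤ (Real.Gamma (1/4) + Real.sqrt (Nat.factorial k)) / π := by
          refine habs.trans ?_
          gcongr
        gcongr
      refine step.trans ?_
      have hid : x^k / (Nat.factorial k : ℝ)
          * ((Real.Gamma (1/4) + Real.sqrt (Nat.factorial k)) / π)
          = Real.Gamma (1/4) / π * (x^k / Nat.factorial k)
            + x^k / π * (Real.sqrt (Nat.factorial k) / (Nat.factorial k : ℝ)) := by
        field_simp
      have hdd : Real.sqrt ((Nat.factorial k : ℝ)) / (Nat.factorial k : ℝ)
          = 1 / Real.sqrt ((Nat.factorial k : ℝ)) := Real.sqrt_div_self'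
      rw [hid, hdd]
      have e3 : x^k / π * (1 / Real.sqrt ((Nat.factorial k : ℝ)))
          = x^k / (π * Real.sqrt ((Nat.factorial k : ℝ))) := by
        rw [div_mul_div_comm, mul_one]
      rw [e3]
      simp only [hbound]
      have hind : (0:ℝ) ≤ if k = 0 then (1:ℝ) else 0 := by
        split <;> norm_num
      linarith
  have key := tendsto_tsum_of_dominated_convergence hsum hlim hbd
  have hgsum : ∑' k, g k = 1 - erf (x/2) := (hasSum_wright_lim x).tsum_eq
  rw [hgsum] at key
  have hfinal := key.const_sub 1
  rw [show (1 : ℝ) - (1 - erf (x/2)) = erf (x/2) by ring] at hfinal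
  refine hfinal.congr fun α => ?_
  simp only [wright, hF]
end

section
/- Let a > −1 and b ∈ ℝ. For every z ∈ ℝ, the function z ↦ W(z,a,b) is differentiable at z with derivative W(z,a,a+b). -/
open Real Filter Set

open Topology

open MeasureTheory in
private lemma exp_neg_one_le_Gamma {s : ℝ} (hs : 1 ≤ s) : Real.exp (-1) ≤ Real.Gamma s := by
  have h0 : (0:ℝ) < s := lt_of_lt_of_le one_pos hs
  have hint : IntegrableOn (fun x : ℝ => Real.exp (-x) * x ^ (s-1)) (Ioi 0) :=
    Real.GammaIntegral_convergent h0
  have hexp : IntegrableOn (fun x : ℝ => Real.exp (-x)) (Ioi 1) := by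
    have := exp_neg_integrableOn_Ioi (1:ℝ) (zero_lt_one (α := ℝ))
    simpa using this
  rw [Real.Gamma_eq_integral h0, ← integral_exp_neg_Ioi 1]
  have step1 : (∫ x in Ioi (1:ℝ), Real.exp (-x)) ≤
      ∫ x in Ioi (1:ℝ), Real.exp (-x) * x ^ (s-1) := by
    refine setIntegral_mono_on hexp (hint.mono_set (Ioi_subset_Ioi zero_le_one))
      measurableSet_Ioi ?_
    intro x hx
    have hx1 : (1:ℝ) ≤ x := le_of_lt hx
    nth_rewrite 1 [← mul_one (Real.exp (-x))]
    gcongr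
    exact Real.one_le_rpow hx1 (by linarith)
  have step2 : (∫ x in Ioi (1:ℝ), Real.exp (-x) * x ^ (s-1)) ≤
      ∫ x in Ioi (0:ℝ), Real.exp (-x) * x ^ (s-1) := by
    apply setIntegral_mono_set hint
    · filter_upwards [ae_restrict_mem measurableSet_Ioi] with x hx
      exact mul_nonneg (Real.exp_nonneg _) (Real.rpow_nonneg (le_of_lt hx) _)
    · exact HasSubset.Subset.eventuallyLE (Ioi_subset_Ioi zero_le_one)
  linarith

private lemma abs_inv_Gamma_le_exp {t : ℝ} (ht : 0 < t) : |(Real.Gamma t)⁻¹| ≤ Real.exp 1 := by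
  have hpos : 0 < Real.Gamma t := Real.Gamma_pos_of_pos ht
  have hlow : Real.exp (-1) ≤ Real.Gamma t := by
    rcases le_or_gt 1 t with h | h
    · exact exp_neg_one_le_Gamma h
    · have h1 : Real.Gamma (t+1) = t * Real.Gamma t := Real.Gamma_add_one (ne_of_gt ht)
      have h2 : Real.exp (-1) ≤ Real.Gamma (t+1) := exp_neg_one_le_Gamma (by linarith)
      rw [h1] at h2
      nlinarith
  rw [abs_of_pos (inv_pos.mpr hpos)]
  have h3 : (Real.exp (-1))⁻¹ = Real.exp 1 := by
    rw [Real.exp_neg, inv_inv]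
  calc (Real.Gamma t)⁻¹ ≤ (Real.exp (-1))⁻¹ :=
        inv_anti₀ (Real.exp_pos _) hlow
    _ = Real.exp 1 := h3

private lemma abs_inv_Gamma_le (t : ℝ) :
    |(Real.Gamma t)⁻¹| ≤ Real.exp 1 + Real.Gamma (2 + |t|) := by
  have hG2 : 0 < Real.Gamma (2 + |t|) := Real.Gamma_pos_of_pos (by positivity)
  rcases lt_or_ge 0 t with ht | ht
  · linarith [abs_inv_Gamma_le_exp ht]
  · by_cases hΓ : Real.Gamma t = 0
    · rw [hΓ]
      simp only [inv_zero, abs_zero]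
      positivity
    · have h1t : (1:ℝ) ≤ 1 - t := by linarith
      have h1tpos : (0:ℝ) < 1 - t := by linarith
      have hG1 : 0 < Real.Gamma (1 - t) := Real.Gamma_pos_of_pos h1tpos
      have href := Real.Gamma_mul_Gamma_one_sub t
      have hsin : Real.sin (π * t) ≠ 0 := by
        intro h
        rw [h, div_zero] at href
        rcases mul_eq_zero.mp href with h' | h'
        · exact hΓ h'
        · exact (ne_of_gt hG1) h'
      have hπ : (0:ℝ) < π := Real.pi_pos
      have hinv : (Real.Gamma t)⁻¹ = Real.Gamma (1 - t) * Real.sin (π * t) / π := by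
        have hΓ1 : Real.Gamma t * Real.Gamma (1 - t) * Real.sin (π * t) = π := by
          rw [href, div_mul_cancel₀ _ hsin]
        rw [eq_div_iff (ne_of_gt hπ)]
        conv_lhs => rw [← hΓ1]
        rw [← mul_assoc, ← mul_assoc, inv_mul_cancel₀ hΓ, one_mul]
      rw [hinv]
      have habs : |Real.Gamma (1 - t) * Real.sin (π * t) / π| ≤ Real.Gamma (1 - t) := by
        rw [abs_div, abs_mul, abs_of_pos hG1, abs_of_pos hπ]
        have hs1 : |Real.sin (π * t)| ≤ 1 := abs_sin_le_one _
        have hπ1 : (1:ℝ) ≤ π := by linarith [Real.pi_gt_three]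
        calc Real.Gamma (1 - t) * |Real.sin (π * t)| / π
            ≤ Real.Gamma (1 - t) * 1 / 1 := by gcongr
          _ = Real.Gamma (1 - t) := by ring
      have hmono : Real.Gamma (1 - t) ≤ Real.Gamma (2 + |t|) := by
        have ht' : |t| = -t := abs_of_nonpos ht
        have h2t : (2:ℝ) + |t| = (1 - t) + 1 := by rw [ht']; ring
        rw [h2t, Real.Gamma_add_one (ne_of_gt h1tpos)]
        nlinarith
      linarith [Real.exp_pos 1]

private lemma Gamma_add_le {x α : ℝ} (hx : 1 ≤ x) (hα0 : 0 ≤ α) (hα1 : α ≤ 1) :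
    Real.Gamma (x + α) ≤ Real.Gamma x * x ^ α := by
  have hx0 : (0:ℝ) < x := lt_of_lt_of_le one_pos hx
  have hΓx : 0 < Real.Gamma x := Real.Gamma_pos_of_pos hx0
  have h1 : Real.Gamma (x+1) = x * Real.Gamma x := Real.Gamma_add_one (ne_of_gt hx0)
  have hc := Real.convexOn_log_Gamma.2 (mem_Ioi.mpr hx0)
    (mem_Ioi.mpr (by linarith : (0:ℝ) < x + 1)) (by linarith : (0:ℝ) ≤ 1 - α) hα0 (by ring)
  simp only [smul_eq_mul, Function.comp_apply] at hc
  have harg : (1-α)*x + α*(x+1) = x + α := by ring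
  rw [harg, h1, Real.log_mul (ne_of_gt hx0) (ne_of_gt hΓx)] at hc
  have hΓxa : 0 < Real.Gamma (x+α) := Real.Gamma_pos_of_pos (by linarith)
  have hrhs : 0 < Real.Gamma x * x ^ α := by positivity
  rw [← Real.log_le_log_iff hΓxa hrhs, Real.log_mul (ne_of_gt hΓx)
    (ne_of_gt (Real.rpow_pos_of_pos hx0 α)), Real.log_rpow hx0]
  nlinarith [hc]

private lemma summable_w (R C : ℝ) :
    Summable (fun n : ℕ => (n : ℝ) * R ^ (n - 1) * C / (Nat.factorial n : ℝ)) := by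
  rw [← summable_nat_add_iff 1]
  have heq : (fun n : ℕ => ((n + 1 : ℕ) : ℝ) * R ^ ((n + 1) - 1) * C / (Nat.factorial (n+1) : ℝ)) =
      fun n : ℕ => (R ^ n / (Nat.factorial n : ℝ)) * C := by
    funext n
    have h3 : ((Nat.factorial n : ℕ) : ℝ) ≠ 0 := Nat.cast_ne_zero.mpr (Nat.factorial_ne_zero n)
    have h2 : ((n:ℝ) + 1) ≠ 0 := by positivity
    simp only [Nat.add_sub_cancel, Nat.factorial_succ]
    push_cast
    field_simp
  rw [heq]
  exact (Real.summable_pow_div_factorial R).mul_right C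

private lemma summable_v {R α c : ℝ} (hR : 1 ≤ R) (hα0 : 0 ≤ α) (hα1 : α < 1) (hc : 0 ≤ c) :
    Summable (fun n : ℕ =>
      (n:ℝ) * R ^ (n-1) * (Real.exp 1 + Real.Gamma (2 + c + α * n)) / (Nat.factorial n : ℝ)) := by
  set v : ℕ → ℝ := fun n =>
    (n:ℝ) * R ^ (n-1) * (Real.exp 1 + Real.Gamma (2 + c + α * n)) / (Nat.factorial n : ℝ) with hv
  have hR0 : (0:ℝ) < R := lt_of_lt_of_le one_pos hR
  apply summable_of_ratio_norm_eventually_le (r := 1/2) (by norm_num)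
  have hK : Tendsto (fun n : ℕ => (R * (2+c+α) ^ α) * (n:ℝ) ^ (α - 1)) atTop (𝓝 0) := by
    have h := (tendsto_rpow_neg_atTop (y := 1 - α) (by linarith)).comp
      (tendsto_natCast_atTop_atTop (R := ℝ))
    have := h.const_mul (R * (2+c+α) ^ α)
    rw [mul_zero] at this
    exact this.congr (fun n => by simp [Function.comp, neg_sub])
  filter_upwards [hK.eventually_lt_const (by norm_num : (0:ℝ) < 1/2),
    eventually_ge_atTop 1] with n hn h1
  obtain ⟨m, rfl⟩ : ∃ m, n = m + 1 := ⟨n - 1, (Nat.succ_pred_eq_of_pos h1).symm⟩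
  set x : ℝ := 2 + c + α * (m+1 : ℕ) with hx
  have hx2 : (2:ℝ) ≤ x := by
    have h' : (0:ℝ) ≤ α * ((m+1:ℕ):ℝ) := mul_nonneg hα0 (by positivity)
    simp only [hx]; linarith
  have hx1 : (1:ℝ) ≤ x := by linarith
  have hx0 : (0:ℝ) < x := by linarith
  have hm1 : (0:ℝ) < ((m:ℝ) + 1) := by positivity
  have hΓx : 0 < Real.Gamma x := Real.Gamma_pos_of_pos hx0
  have hfac : (0:ℝ) < (Nat.factorial (m+1) : ℝ) := by
    exact_mod_cast Nat.factorial_pos (m+1)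
  have hE : 0 < Real.exp 1 + Real.Gamma x := by linarith [Real.exp_pos 1]
  have hxα1 : (1:ℝ) ≤ x ^ α := Real.one_le_rpow hx1 hα0
  -- ratio bound: R * x^α / (m+1) ≤ 1/2
  have hxub : x ≤ (2+c+α) * ((m:ℝ)+1) := by
    rw [hx]
    push_cast
    nlinarith [Nat.cast_nonneg (α := ℝ) m, hc]
  have hxαub : x ^ α ≤ (2+c+α) ^ α * ((m:ℝ)+1) ^ α := by
    rw [← Real.mul_rpow (by linarith) (by positivity)]
    exact Real.rpow_le_rpow (by linarith) hxub hα0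
  have hratio : R * x ^ α / ((m:ℝ)+1) ≤ 1/2 := by
    have hrw : ((m:ℝ)+1) ^ (α - 1) = ((m:ℝ)+1) ^ α / ((m:ℝ)+1) := by
      rw [Real.rpow_sub hm1, Real.rpow_one]
    have hn' : (R * (2+c+α) ^ α) * (((m+1:ℕ)):ℝ) ^ (α-1) < 1/2 := hn
    push_cast at hn'
    rw [hrw] at hn'
    have hmid : R * x ^ α / ((m:ℝ)+1) ≤ R * ((2+c+α) ^ α * ((m:ℝ)+1) ^ α) / ((m:ℝ)+1) := by
      gcongr
    calc R * x ^ α / ((m:ℝ)+1) ≤ R * ((2+c+α) ^ α * ((m:ℝ)+1) ^ α) / ((m:ℝ)+1) := hmid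
      _ = (R * (2+c+α) ^ α) * (((m:ℝ)+1) ^ α / ((m:ℝ)+1)) := by ring
      _ ≤ 1/2 := le_of_lt hn'
  -- now the main computation
  have harg : (2:ℝ) + c + α * ((m+1+1 : ℕ):ℝ) = x + α := by push_cast [hx]; ring
  have hfs : (Nat.factorial (m+1+1) : ℝ) = ((m:ℝ)+2) * (Nat.factorial (m+1) : ℝ) := by
    rw [Nat.factorial_succ]; push_cast; ring
  have hvs : v (m+1+1) = R ^ (m+1) * (Real.exp 1 + Real.Gamma (x + α)) / (Nat.factorial (m+1) : ℝ) := by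
    simp only [hv, Nat.add_sub_cancel, harg, hfs]
    have h2 : ((m:ℝ)+2) ≠ 0 := by positivity
    push_cast
    field_simp
    ring
  have hvn : v (m+1) = ((m:ℝ)+1) * R ^ m * (Real.exp 1 + Real.Gamma x) / (Nat.factorial (m+1) : ℝ) := by
    simp only [hv, Nat.add_sub_cancel, ← hx]
    push_cast
    ring
  have hvpos : 0 ≤ v (m+1) := by
    rw [hvn]
    have : (0:ℝ) ≤ Real.exp 1 + Real.Gamma x := le_of_lt hE
    positivity
  have hΓxα : 0 < Real.Gamma (x + α) := Real.Gamma_pos_of_pos (by linarith)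
  have hvspos : 0 ≤ v (m+1+1) := by
    rw [hvs]
    have : (0:ℝ) ≤ Real.exp 1 + Real.Gamma (x+α) := by linarith [Real.exp_pos 1]
    positivity
  rw [Real.norm_eq_abs, Real.norm_eq_abs, abs_of_nonneg hvspos, abs_of_nonneg hvpos, hvs, hvn]
  have hstep : Real.exp 1 + Real.Gamma (x + α) ≤ (Real.exp 1 + Real.Gamma x) * x ^ α := by
    have h1' := Gamma_add_le hx1 hα0 (le_of_lt hα1)
    nlinarith [Real.exp_pos 1]
  calc R ^ (m+1) * (Real.exp 1 + Real.Gamma (x + α)) / (Nat.factorial (m+1) : ℝ)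
      ≤ R ^ (m+1) * ((Real.exp 1 + Real.Gamma x) * x ^ α) / (Nat.factorial (m+1) : ℝ) := by
        gcongr
    _ = (R * x ^ α / ((m:ℝ)+1)) *
        (((m:ℝ)+1) * R ^ m * (Real.exp 1 + Real.Gamma x) / (Nat.factorial (m+1) : ℝ)) := by
        field_simp
        ring
    _ ≤ (1/2) * (((m:ℝ)+1) * R ^ m * (Real.exp 1 + Real.Gamma x) / (Nat.factorial (m+1) : ℝ)) := by
        have hpos : 0 ≤ ((m:ℝ)+1) * R ^ m * (Real.exp 1 + Real.Gamma x) / (Nat.factorial (m+1) : ℝ) := by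
          positivity
        exact mul_le_mul_of_nonneg_right hratio hpos


theorem wright_hasDerivAt (a b : ℝ) (ha : -1 < a) (z : ℝ) :
    HasDerivAt (fun y : ℝ => wright y a b) (wright z a (a + b)) z := by
  set R : ℝ := |z| + 1 with hRdef
  have hR1 : (1:ℝ) ≤ R := by have := abs_nonneg z; simp only [hRdef]; linarith
  have hR0 : (0:ℝ) < R := by linarith
  set g : ℕ → ℝ → ℝ := fun n y => y ^ n / (Nat.factorial n * Real.Gamma (a * n + b)) with hgdef
  set g' : ℕ → ℝ → ℝ :=
    fun n y => (n:ℝ) * y ^ (n-1) / (Nat.factorial n * Real.Gamma (a * n + b)) with hg'def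
  set u : ℕ → ℝ :=
    fun n => (n:ℝ) * R ^ (n-1) * |(Real.Gamma (a * n + b))⁻¹| / (Nat.factorial n : ℝ) with hudef
  have hfacpos : ∀ n : ℕ, (0:ℝ) < (Nat.factorial n : ℝ) := fun n => by
    exact_mod_cast Nat.factorial_pos n
  have hu0 : ∀ n, 0 ≤ u n := fun n => by
    simp only [hudef]; positivity
  have hU : Summable u := by
    rcases lt_or_ge a 1 with hlt | hge
    · have habs : |a| < 1 := abs_lt.mpr ⟨ha, hlt⟩
      refine Summable.of_nonneg_of_le hu0 ?_ (summable_v hR1 (abs_nonneg a) habs (abs_nonneg b))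
      intro n
      have hfactor : |(Real.Gamma (a * n + b))⁻¹| ≤
          Real.exp 1 + Real.Gamma (2 + |b| + |a| * n) := by
        calc |(Real.Gamma (a * n + b))⁻¹|
            ≤ Real.exp 1 + Real.Gamma (2 + |a * n + b|) := abs_inv_Gamma_le _
          _ ≤ Real.exp 1 + Real.Gamma (2 + |b| + |a| * n) := by
              have h1 : |a * (n:ℝ) + b| ≤ |a| * n + |b| := by
                calc |a * (n:ℝ) + b| ≤ |a * (n:ℝ)| + |b| := abs_add_le _ _
                  _ = |a| * n + |b| := by rw [abs_mul, Nat.abs_cast]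
              have h2 : (2:ℝ) + |a * n + b| ≤ 2 + |b| + |a| * n := by linarith
              have h3 := Real.Gamma_strictMonoOn_Ici.monotoneOn
                (mem_Ici.mpr (by linarith [abs_nonneg (a * (n:ℝ) + b)] :
                  (2:ℝ) ≤ 2 + |a * ↑n + b|))
                (mem_Ici.mpr (by
                  have := mul_nonneg (abs_nonneg a) (Nat.cast_nonneg (α := ℝ) n)
                  linarith [abs_nonneg b] : (2:ℝ) ≤ 2 + |b| + |a| * ↑n)) h2
              linarith
      simp only [hudef]
      gcongr
  -- hfactor closes the factor goal via gcongr's assumption search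
    · set N : ℕ := Nat.ceil (1 - b) with hN
      rw [← summable_nat_add_iff N]
      refine Summable.of_nonneg_of_le (fun n => hu0 _) ?_
        ((summable_nat_add_iff N).mpr (summable_w R (Real.exp 1)))
      intro n
      have hpos : (1:ℝ) ≤ a * ((n + N : ℕ):ℝ) + b := by
        have h1 : (1 - b : ℝ) ≤ (N:ℝ) := Nat.le_ceil _
        have h2 : ((N:ℕ):ℝ) ≤ ((n+N:ℕ):ℝ) := by
          push_cast; linarith [Nat.cast_nonneg (α := ℝ) n]
        have h3 : ((n+N:ℕ):ℝ) ≤ a * ((n+N:ℕ):ℝ) :=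
          le_mul_of_one_le_left (Nat.cast_nonneg _) hge
        linarith
      have hb' : |(Real.Gamma (a * ((n+N:ℕ):ℝ) + b))⁻¹| ≤ Real.exp 1 :=
        abs_inv_Gamma_le_exp (lt_of_lt_of_le one_pos hpos)
      simp only [hudef]
      gcongr
  have hball : z ∈ Metric.ball z 1 := Metric.mem_ball_self one_pos
  have hderiv : ∀ (n : ℕ), ∀ y ∈ Metric.ball z 1, HasDerivAt (g n) (g' n y) y := by
    intro n y _
    exact (hasDerivAt_pow n y).div_const ((Nat.factorial n : ℝ) * Real.Gamma (a * n + b))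
  have habs_eq : ∀ (n : ℕ) (y : ℝ),
      |g' n y| = (n:ℝ) * |y| ^ (n-1) * |(Real.Gamma (a * n + b))⁻¹| / (Nat.factorial n : ℝ) := by
    intro n y
    simp only [hg'def]
    rw [mul_comm ((Nat.factorial n : ℝ)) (Real.Gamma (a * n + b)), ← div_div,
      div_eq_mul_inv ((n:ℝ) * y ^ (n-1)) (Real.Gamma (a * n + b)),
      abs_div, abs_mul, abs_mul, abs_pow, Nat.abs_cast, abs_of_pos (hfacpos n)]
  have hbound : ∀ (n : ℕ), ∀ y ∈ Metric.ball z 1, ‖g' n y‖ ≤ u n := by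
    intro n y hy
    have hyR : |y| ≤ R := by
      have h := Metric.mem_ball.mp hy
      rw [Real.dist_eq] at h
      have h2 := abs_sub_abs_le_abs_sub y z
      simp only [hRdef]; linarith
    rw [Real.norm_eq_abs, habs_eq]
    simp only [hudef]
    gcongr
  have hgz_abs : ∀ n : ℕ,
      |g n z| = |z| ^ n * |(Real.Gamma (a * n + b))⁻¹| / (Nat.factorial n : ℝ) := by
    intro n
    simp only [hgdef]
    rw [mul_comm ((Nat.factorial n : ℝ)) (Real.Gamma (a * n + b)), ← div_div,
      div_eq_mul_inv (z ^ n) (Real.Gamma (a * n + b)),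
      abs_div, abs_mul, abs_pow, abs_of_pos (hfacpos n)]
  have hg0 : Summable (fun n => g n z) := by
    rw [← summable_nat_add_iff 1]
    apply Summable.of_norm_bounded (g := fun n => R * u (n+1))
      (((summable_nat_add_iff 1).mpr hU).mul_left R)
    intro n
    rw [Real.norm_eq_abs, hgz_abs]
    simp only [hudef, Nat.add_sub_cancel]
    have h1n : (1:ℝ) ≤ ((n+1:ℕ):ℝ) := by exact_mod_cast Nat.one_le_iff_ne_zero.mpr (Nat.succ_ne_zero n)
    have hzR : |z| ≤ R := by simp only [hRdef]; linarith [abs_nonneg z]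
    calc |z| ^ (n+1) * |(Real.Gamma (a * ((n+1:ℕ):ℝ) + b))⁻¹| / (Nat.factorial (n+1) : ℝ)
        ≤ R ^ (n+1) * |(Real.Gamma (a * ((n+1:ℕ):ℝ) + b))⁻¹| / (Nat.factorial (n+1) : ℝ) := by
          gcongr
      _ = R * (R ^ n * |(Real.Gamma (a * ((n+1:ℕ):ℝ) + b))⁻¹| / (Nat.factorial (n+1) : ℝ)) := by
          rw [pow_succ]; ring
      _ ≤ R * (((n+1:ℕ):ℝ) * (R ^ n * |(Real.Gamma (a * ((n+1:ℕ):ℝ) + b))⁻¹| /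
            (Nat.factorial (n+1) : ℝ))) := by
          have hnn : (0:ℝ) ≤ R ^ n * |(Real.Gamma (a * ((n+1:ℕ):ℝ) + b))⁻¹| /
              (Nat.factorial (n+1) : ℝ) := by positivity
          exact mul_le_mul_of_nonneg_left (le_mul_of_one_le_left hnn h1n) (le_of_lt hR0)
      _ = R * (((n+1:ℕ):ℝ) * R ^ n * |(Real.Gamma (a * ((n+1:ℕ):ℝ) + b))⁻¹| /
            (Nat.factorial (n+1) : ℝ)) := by ring
  have hsum' : Summable (fun n => g' n z) :=
    Summable.of_norm_bounded (g := u) hU (fun n => hbound n z hball)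
  have key := hasDerivAt_tsum_of_isPreconnected hU Metric.isOpen_ball
    (convex_ball z 1).isPreconnected hderiv hbound hball hg0 hball
  have hval : ∑' n, g' n z = wright z a (a + b) := by
    rw [Summable.tsum_eq_zero_add hsum']
    have h0 : g' 0 z = 0 := by simp [hg'def]
    rw [h0, zero_add]
    unfold wright
    apply tsum_congr
    intro k
    simp only [hg'def, Nat.add_sub_cancel]
    have harg : a * ((k+1:ℕ):ℝ) + b = a * k + (a + b) := by push_cast; ring
    rw [harg, Nat.factorial_succ]
    push_cast
    rw [show (((k:ℝ)+1) * (Nat.factorial k : ℝ)) * Real.Gamma (a * k + (a+b)) =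
        ((k:ℝ)+1) * ((Nat.factorial k : ℝ) * Real.Gamma (a * k + (a+b))) from by ring,
      mul_div_mul_left _ _ (by positivity : ((k:ℝ)+1) ≠ 0)]
  rw [← hval]
  exact key
end
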